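/- Let A be a primitive nonnegative integer matrix with Perron eigenvalue λ_A. Then for all pairs of index pairs (i,j) and (p,q), the ratio log(A^k_{i,j}!) / log(A^k_{p,q}!) converges as k → ∞ to (vu)_{i,j}/(vu)_{p,q}, where vu is the normalized Perron projection. Consequently there exist K ∈ ℕ and constants 0 < C ≤ 1 ≤ D such that for all k ≥ K and all i,j,p,q: C ≤ log((1/2)·A^k_{i,j}!) / log((1/2)·A^k_{p,q}!) ≤ D. -/

import Mathlib

open Filter Matrix Nat

lemma pow_le_factorial_mul_exp (n : ℕ) : (n : ℝ) ^ n ≤ n ! * Real.exp n := by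
  have h : (n : ℝ) ^ n / n ! ≤ Real.exp n := by
    calc (n : ℝ) ^ n / n ! ≤ ∑ i ∈ Finset.range (n + 1), (n : ℝ) ^ i / i !
          := Finset.single_le_sum (f := fun i => (n : ℝ) ^ i / i !)
              (fun i _ => by positivity) (Finset.self_mem_range_succ n)
      _ ≤ Real.exp n := Real.sum_le_exp_of_nonneg (by positivity) _
  calc (n : ℝ) ^ n = ((n : ℝ) ^ n / n !) * n ! := by
        field_simp
    _ ≤ Real.exp n * n ! := by
        apply mul_le_mul_of_nonneg_right h (by positivity)
    _ = n ! * Real.exp n := mul_comm _ _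

lemma log_factorial_le (n : ℕ) : Real.log n ! ≤ n * Real.log n := by
  calc Real.log n ! ≤ Real.log ((n : ℝ) ^ n) := by
        apply Real.log_le_log (by exact_mod_cast Nat.factorial_pos n)
        exact_mod_cast Nat.factorial_le_pow n
    _ = n * Real.log n := Real.log_pow n n

lemma le_log_factorial (n : ℕ) : (n : ℝ) * Real.log n - n ≤ Real.log n ! := by
  have h := pow_le_factorial_mul_exp n
  have hf : (0:ℝ) < n ! := by exact_mod_cast Nat.factorial_pos n
  have h2 : Real.log ((n:ℝ) ^ n) ≤ Real.log (n ! * Real.exp n) := by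
    rcases Nat.eq_zero_or_pos n with rfl | hn
    · simp
    · exact Real.log_le_log (by positivity) h
  rw [Real.log_pow, Real.log_mul (by positivity) (Real.exp_ne_zero _), Real.log_exp] at h2
  linarith

lemma tendsto_log_factorial_div : Tendsto (fun n : ℕ => Real.log n ! / ((n : ℝ) * Real.log n))
    atTop (nhds 1) := by
  have hlog : Tendsto (fun n : ℕ => Real.log n) atTop atTop :=
    Real.tendsto_log_atTop.comp tendsto_natCast_atTop_atTop
  have h1 : Tendsto (fun n : ℕ => 1 - 1 / Real.log n) atTop (nhds 1) := by
    have := hlog.inv_tendsto_atTop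
    have h := (tendsto_const_nhds (x := (1:ℝ))).sub this
    simpa [one_div] using h
  refine tendsto_of_tendsto_of_tendsto_of_le_of_le' h1 tendsto_const_nhds ?_ ?_
  · filter_upwards [eventually_ge_atTop 3] with n hn
    have hn1 : (1:ℝ) < n := by exact_mod_cast Nat.lt_of_lt_of_le (by norm_num) hn
    have hln : 0 < Real.log n := Real.log_pos hn1
    have hnn : (0:ℝ) < n := by linarith
    rw [le_div_iff₀ (by positivity)]
    have he : (1 - 1/Real.log n) * (n*Real.log n) = n*Real.log n - n := by
      field_simp
    rw [he]
    linarith [le_log_factorial n]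
  · filter_upwards [eventually_ge_atTop 3] with n hn
    have hn1 : (1:ℝ) < n := by exact_mod_cast Nat.lt_of_lt_of_le (by norm_num) hn
    have hln : 0 < Real.log n := Real.log_pos hn1
    have hnn : (0:ℝ) < n := by linarith
    rw [div_le_one (by positivity)]
    exact log_factorial_le n

lemma log_factorial_pos {n : ℕ} (hn : 2 ≤ n) : 0 < Real.log n ! := by
  apply Real.log_pos
  have : 2 ≤ n ! := le_trans hn (Nat.self_le_factorial n)
  exact_mod_cast lt_of_lt_of_le one_lt_two (by exact_mod_cast this)

lemma tendsto_log_factorial_ratio {a b : ℕ → ℕ} (ha : Tendsto a atTop atTop)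
    (hb : Tendsto b atTop atTop) {c : ℝ} (hc : 0 < c)
    (hab : Tendsto (fun k => (a k : ℝ) / (b k : ℝ)) atTop (nhds c)) :
    Tendsto (fun k => Real.log (a k)! / Real.log (b k)!) atTop (nhds c) := by
  have hlog : Tendsto (fun n : ℕ => Real.log n) atTop atTop :=
    Real.tendsto_log_atTop.comp tendsto_natCast_atTop_atTop
  have hFa : Tendsto (fun k => Real.log (a k)! / ((a k : ℝ) * Real.log (a k)))
      atTop (nhds 1) := tendsto_log_factorial_div.comp ha
  have hFb : Tendsto (fun k => Real.log (b k)! / ((b k : ℝ) * Real.log (b k)))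
      atTop (nhds 1) := tendsto_log_factorial_div.comp hb
  have hGFb : Tendsto (fun k => ((b k : ℝ) * Real.log (b k)) / Real.log (b k)!)
      atTop (nhds 1) := by
    have := hFb.inv₀ one_ne_zero
    simp only [inv_div, inv_one] at this
    exact this
  -- log a / log b → 1
  have hlb : Tendsto (fun k => Real.log (b k)) atTop atTop := hlog.comp hb
  have hla2 : ∀ᶠ k in atTop, 2 ≤ a k := ha.eventually (eventually_ge_atTop 2)
  have hlb2 : ∀ᶠ k in atTop, 2 ≤ b k := hb.eventually (eventually_ge_atTop 2)
  have hld : Tendsto (fun k => Real.log ((a k : ℝ) / (b k : ℝ))) atTop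
      (nhds (Real.log c)) := ((Real.continuousAt_log hc.ne').tendsto).comp hab
  have hsmall : Tendsto (fun k => Real.log ((a k : ℝ) / (b k : ℝ)) / Real.log (b k))
      atTop (nhds 0) := hld.div_atTop hlb
  have hlogratio : Tendsto (fun k => Real.log (a k) / Real.log (b k)) atTop (nhds 1) := by
    have h1 : Tendsto (fun k => 1 + Real.log ((a k : ℝ) / (b k : ℝ)) / Real.log (b k))
        atTop (nhds 1) := by simpa using (tendsto_const_nhds (x := (1:ℝ))).add hsmall
    apply h1.congr'
    filter_upwards [hla2, hlb2] with k ha2 hb2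
    have hao : (0:ℝ) < a k := by exact_mod_cast lt_of_lt_of_le two_pos ha2
    have hbo : (0:ℝ) < b k := by exact_mod_cast lt_of_lt_of_le two_pos hb2
    have hlbne : Real.log (b k) ≠ 0 :=
      (Real.log_pos (by exact_mod_cast lt_of_lt_of_le one_lt_two (by exact_mod_cast hb2))).ne'
    rw [Real.log_div hao.ne' hbo.ne']
    field_simp
    ring
  have middle : Tendsto (fun k => ((a k : ℝ) * Real.log (a k)) / ((b k : ℝ) * Real.log (b k)))
      atTop (nhds c) := by
    have := hab.mul hlogratio
    rw [mul_one] at this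
    apply this.congr
    intro k
    exact div_mul_div_comm _ _ _ _
  have hprod := hFa.mul (middle.mul hGFb)
  rw [mul_one, one_mul] at hprod
  apply hprod.congr'
  filter_upwards [hla2, hlb2] with k ha2 hb2
  have hao : (0:ℝ) < a k := by exact_mod_cast lt_of_lt_of_le two_pos ha2
  have hbo : (0:ℝ) < b k := by exact_mod_cast lt_of_lt_of_le two_pos hb2
  have hlane : Real.log (a k) ≠ 0 :=
    (Real.log_pos (by exact_mod_cast lt_of_lt_of_le one_lt_two (by exact_mod_cast ha2))).ne'
  have hlbne : Real.log (b k) ≠ 0 :=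
    (Real.log_pos (by exact_mod_cast lt_of_lt_of_le one_lt_two (by exact_mod_cast hb2))).ne'
  have hFbne : Real.log (b k)! ≠ 0 := (log_factorial_pos hb2).ne'
  field_simp


lemma mulVec_pow_eigen {r : ℕ} (Ac : Matrix (Fin r) (Fin r) ℝ) (lam : ℝ) (v : Fin r → ℝ)
    (h : Ac *ᵥ v = lam • v) (n : ℕ) : (Ac ^ n) *ᵥ v = lam ^ n • v := by
  induction n with
  | zero => simp
  | succ n ih =>
      rw [pow_succ, ← Matrix.mulVec_mulVec, h, Matrix.mulVec_smul, ih, smul_smul, mul_comm, ← pow_succ]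

lemma vecMul_pow_eigen {r : ℕ} (Ac : Matrix (Fin r) (Fin r) ℝ) (lam : ℝ) (u : Fin r → ℝ)
    (h : u ᵥ* Ac = lam • u) (n : ℕ) : u ᵥ* (Ac ^ n) = lam ^ n • u := by
  induction n with
  | zero => simp
  | succ n ih =>
      rw [pow_succ, ← Matrix.vecMul_vecMul, ih, Matrix.smul_vecMul, h, smul_smul, ← pow_succ]

lemma perron_entry_tendsto {r : ℕ} (A : Matrix (Fin r) (Fin r) ℕ) (hr : 0 < r)
    (K : ℕ) (hK1 : 1 ≤ K) (hK : ∀ i j, 0 < (A ^ K) i j)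
    (lam : ℝ) (hlam : 1 < lam)
    (u v : Fin r → ℝ) (hu : ∀ i, 0 < u i) (hv : ∀ i, 0 < v i)
    (hleft : u ᵥ* (A.map (Nat.cast : ℕ → ℝ)) = lam • u)
    (hright : (A.map (Nat.cast : ℕ → ℝ)) *ᵥ v = lam • v)
    (hnorm : ∑ i, u i * v i = 1) (i j : Fin r) :
    Tendsto (fun k : ℕ => ((A ^ k) i j : ℝ) / lam ^ k) atTop (nhds (v i * u j)) := by
  have hne : (Finset.univ : Finset (Fin r)).Nonempty := ⟨⟨0, hr⟩, Finset.mem_univ _⟩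
  set Ac := A.map (Nat.cast : ℕ → ℝ) with hAc
  have hlam0 : (0:ℝ) < lam := lt_trans one_pos hlam
  have hcast : ∀ (n : ℕ) (a b : Fin r), (Ac ^ n) a b = ((A ^ n) a b : ℝ) := by
    intro n a b
    have h1 : Ac ^ n = (A ^ n).map (Nat.cast : ℕ → ℝ) := by
      rw [hAc]
      have := map_pow ((Nat.castRingHom ℝ).mapMatrix) A n
      simpa [RingHom.mapMatrix_apply] using this.symm
    rw [h1]; rfl
  have hAnn : ∀ (n : ℕ) (a b : Fin r), 0 ≤ (Ac ^ n) a b := by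
    intro n a b; rw [hcast]; positivity
  set g : ℕ → Fin r → ℝ := fun k a => (Ac ^ k) a j / (lam ^ k * v a) with hgdef
  set W : ℕ → Fin r → Fin r → ℝ := fun n a b => (Ac ^ n) a b * v b / (lam ^ n * v a) with hWdef
  have hWnn : ∀ n a b, 0 ≤ W n a b := by
    intro n a b
    have := hAnn n a b
    have hva := (hv a).le
    have hvb := (hv b).le
    positivity
  have hWsum : ∀ n a, ∑ b, W n a b = 1 := by
    intro n a
    have h1 : ∑ b, (Ac ^ n) a b * v b = lam ^ n * v a :=
      congrFun (mulVec_pow_eigen Ac lam v hright n) a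
    show ∑ b, (Ac ^ n) a b * v b / (lam ^ n * v a) = 1
    rw [← Finset.sum_div, h1]
    have hva := hv a
    have : lam ^ n * v a ≠ 0 := by positivity
    exact div_self this
  have hrec : ∀ n k a, g (n + k) a = ∑ b, W n a b * g k b := by
    intro n k a
    rw [hgdef, hWdef]
    simp only [pow_add, Matrix.mul_apply, Finset.sum_div]
    apply Finset.sum_congr rfl
    intro b _
    have hva := (hv a).ne'
    have hvb := (hv b).ne'
    have hl : lam ^ n ≠ 0 := by positivity
    have hl2 : lam ^ k ≠ 0 := by positivity
    field_simp
  set m : ℕ → ℝ := fun k => Finset.univ.inf' hne (g k) with hmdef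
  set M : ℕ → ℝ := fun k => Finset.univ.sup' hne (g k) with hMdef
  have hgm : ∀ k a, m k ≤ g k a := fun k a => Finset.inf'_le _ (Finset.mem_univ a)
  have hgM : ∀ k a, g k a ≤ M k := fun k a => Finset.le_sup' _ (Finset.mem_univ a)
  have hmM : ∀ k, m k ≤ M k := fun k => le_trans (hgm k ⟨0, hr⟩) (hgM k ⟨0, hr⟩)
  have bound_hi : ∀ n k a, g (n + k) a ≤ M k := by
    intro n k a
    rw [hrec]
    calc ∑ b, W n a b * g k b ≤ ∑ b, W n a b * M k :=
          Finset.sum_le_sum fun b _ => mul_le_mul_of_nonneg_left (hgM k b) (hWnn n a b)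
      _ = M k := by rw [← Finset.sum_mul, hWsum, one_mul]
  have bound_lo : ∀ n k a, m k ≤ g (n + k) a := by
    intro n k a
    rw [hrec]
    calc m k = ∑ b, W n a b * m k := by rw [← Finset.sum_mul, hWsum, one_mul]
      _ ≤ ∑ b, W n a b * g k b :=
          Finset.sum_le_sum fun b _ => mul_le_mul_of_nonneg_left (hgm k b) (hWnn n a b)
  have hMmono : ∀ n k, M (n + k) ≤ M k := fun n k =>
    Finset.sup'_le _ _ fun a _ => bound_hi n k a
  have hmmono : ∀ n k, m k ≤ m (n + k) := fun n k =>
    Finset.le_inf' _ _ fun a _ => bound_lo n k a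
  set θ : ℝ := Finset.univ.inf' hne fun a => Finset.univ.inf' hne fun b => W K a b with hθdef
  have hθle : ∀ a b, θ ≤ W K a b := fun a b =>
    le_trans (Finset.inf'_le _ (Finset.mem_univ a)) (Finset.inf'_le _ (Finset.mem_univ b))
  have hθpos : 0 < θ := by
    obtain ⟨a, _, ha⟩ := Finset.exists_mem_eq_inf' hne fun a => Finset.univ.inf' hne fun b => W K a b
    obtain ⟨b, _, hb⟩ := Finset.exists_mem_eq_inf' hne fun b => W K a b
    rw [hθdef, ha, hb, hWdef]
    have h1 : 0 < (Ac ^ K) a b := by rw [hcast]; exact_mod_cast hK a b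
    have := hv a; have := hv b
    positivity
  have hθ1 : θ ≤ 1 := by
    have h1 : W K ⟨0, hr⟩ ⟨0, hr⟩ ≤ ∑ b, W K ⟨0, hr⟩ b :=
      Finset.single_le_sum (fun b _ => hWnn K _ b) (Finset.mem_univ _)
    rw [hWsum] at h1
    exact le_trans (hθle _ _) h1
  have hcontr : ∀ k, M (K + k) - m (K + k) ≤ (1 - θ) * (M k - m k) := by
    intro k
    obtain ⟨b0, _, hb0⟩ := Finset.exists_mem_eq_inf' hne (g k)
    have key : ∀ a, g (K + k) a ≤ M k - θ * (M k - m k) := by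
      intro a
      have heq : ∑ b, W K a b * (M k - g k b) = M k - g (K + k) a := by
        rw [hrec]
        simp only [mul_sub]
        rw [Finset.sum_sub_distrib, ← Finset.sum_mul, hWsum, one_mul]
      have hsingle : W K a b0 * (M k - g k b0) ≤ ∑ b, W K a b * (M k - g k b) :=
        Finset.single_le_sum
          (fun b _ => mul_nonneg (hWnn K a b) (sub_nonneg.2 (hgM k b))) (Finset.mem_univ b0)
      have hθmul : θ * (M k - m k) ≤ W K a b0 * (M k - g k b0) := by
        rw [← hb0] at *
        exact mul_le_mul (hθle a b0) le_rfl (sub_nonneg.2 (hmM k)) ((hθpos.le).trans (hθle a b0))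
      have := le_trans hθmul (le_trans hsingle (le_of_eq heq))
      linarith
    have hM' : M (K + k) ≤ M k - θ * (M k - m k) :=
      Finset.sup'_le _ _ fun a _ => key a
    have hm' : m k ≤ m (K + k) := hmmono K k
    nlinarith [hmM k]
  set d : ℕ → ℝ := fun k => M k - m k with hddef
  have hd0 : ∀ k, 0 ≤ d k := fun k => sub_nonneg.2 (hmM k)
  have hdanti : ∀ k k', k ≤ k' → d k' ≤ d k := by
    intro k k' h
    obtain ⟨n, rfl⟩ := Nat.exists_eq_add_of_le h
    have := hMmono n k
    have := hmmono n k
    rw [hddef]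
    simp only []
    rw [Nat.add_comm k n]
    linarith
  have hdK : ∀ s : ℕ, d (s * K) ≤ (1 - θ) ^ s * d 0 := by
    intro s
    induction s with
    | zero => simp
    | succ s ih =>
        have h1 : d ((s + 1) * K) = d (K + s * K) := by ring_nf
        rw [h1, pow_succ]
        calc d (K + s * K) ≤ (1 - θ) * d (s * K) := hcontr (s * K)
          _ ≤ (1 - θ) * ((1 - θ) ^ s * d 0) :=
              mul_le_mul_of_nonneg_left ih (by linarith)
          _ = (1 - θ) ^ s * (1 - θ) * d 0 := by ring
  have hdiv : Tendsto (fun k : ℕ => k / K) atTop atTop :=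
    (Filter.map_div_atTop_eq_nat K (by omega)).le
  have hpow : Tendsto (fun k : ℕ => (1 - θ) ^ (k / K) * d 0) atTop (nhds 0) := by
    have h1 : Tendsto (fun s : ℕ => (1 - θ) ^ s) atTop (nhds 0) :=
      tendsto_pow_atTop_nhds_zero_of_lt_one (by linarith) (by linarith)
    have := (h1.comp hdiv).mul_const (d 0)
    simpa using this
  have hdlim : Tendsto d atTop (nhds 0) := by
    refine tendsto_of_tendsto_of_tendsto_of_le_of_le' tendsto_const_nhds hpow ?_ ?_
    · exact Eventually.of_forall hd0
    · apply Eventually.of_forall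
      intro k
      calc d k ≤ d (k / K * K) := hdanti _ _ (Nat.div_mul_le_self k K)
        _ ≤ (1 - θ) ^ (k / K) * d 0 := hdK _
  have hmmon : Monotone m := by
    intro k k' h
    obtain ⟨n, rfl⟩ := Nat.exists_eq_add_of_le h
    rw [Nat.add_comm k n]
    exact hmmono n k
  have hmbdd : BddAbove (Set.range m) := by
    refine ⟨M 0, ?_⟩
    rintro x ⟨k, rfl⟩
    calc m k ≤ M k := hmM k
      _ ≤ M 0 := by have := hMmono k 0; simpa using this
  set L : ℝ := ⨆ k, m k with hLdef
  have hmlim : Tendsto m atTop (nhds L) := tendsto_atTop_ciSup hmmon hmbdd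
  have hMlim : Tendsto M atTop (nhds L) := by
    have := hmlim.add hdlim
    rw [add_zero] at this
    apply this.congr
    intro k
    rw [hddef]
    ring
  have hglim : ∀ a, Tendsto (fun k => g k a) atTop (nhds L) :=
    fun a => tendsto_of_tendsto_of_tendsto_of_le_of_le hmlim hMlim
      (fun k => hgm k a) (fun k => hgM k a)
  -- identify L = u j
  have hsumconst : ∀ k, ∑ a, u a * v a * g k a = u j := by
    intro k
    have h1 : ∑ a, u a * (Ac ^ k) a j = lam ^ k * u j :=
      congrFun (vecMul_pow_eigen Ac lam u hleft k) j
    have hl : lam ^ k ≠ 0 := by positivity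
    calc ∑ a, u a * v a * g k a = ∑ a, u a * (Ac ^ k) a j / lam ^ k := by
          apply Finset.sum_congr rfl
          intro a _
          rw [hgdef]
          have hva := (hv a).ne'
          field_simp
      _ = (∑ a, u a * (Ac ^ k) a j) / lam ^ k := by rw [Finset.sum_div]
      _ = u j := by rw [h1]; field_simp
  have hLsum : Tendsto (fun k => ∑ a, u a * v a * g k a) atTop (nhds (∑ a, u a * v a * L)) :=
    tendsto_finset_sum _ fun a _ => (hglim a).const_mul _
  have hL : L = u j := by
    have h2 : (∑ a, u a * v a * L) = L := by rw [← Finset.sum_mul, hnorm, one_mul]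
    rw [h2] at hLsum
    exact tendsto_nhds_unique (hLsum.congr fun k => hsumconst k) tendsto_const_nhds
  have hfin : Tendsto (fun k => g k i * v i) atTop (nhds (L * v i)) :=
    (hglim i).mul_const _
  rw [hL] at hfin
  rw [mul_comm (v i) (u j)]
  apply hfin.congr
  intro k
  simp only [hgdef]
  have hva := (hv i).ne'
  have hl : lam ^ k ≠ 0 := by positivity
  rw [hcast]
  field_simp


lemma log_factorial_tendsto_atTop {a : ℕ → ℕ} (ha : Tendsto a atTop atTop) :
    Tendsto (fun k => Real.log ((a k)! : ℝ)) atTop atTop := by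
  have hlog : Tendsto (fun n : ℕ => Real.log n) atTop atTop :=
    Real.tendsto_log_atTop.comp tendsto_natCast_atTop_atTop
  have hfact : Tendsto (fun k => (a k)!) atTop atTop :=
    tendsto_atTop_mono (fun k => Nat.self_le_factorial (a k)) ha
  exact hlog.comp hfact

lemma tendsto_log_half_factorial_ratio {a b : ℕ → ℕ} (ha : Tendsto a atTop atTop)
    (hb : Tendsto b atTop atTop) {c : ℝ} (hc : 0 < c)
    (hab : Tendsto (fun k => (a k : ℝ) / (b k : ℝ)) atTop (nhds c)) :
    Tendsto (fun k => Real.log ((1/2 : ℝ) * ((a k)! : ℝ)) /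
      Real.log ((1/2 : ℝ) * ((b k)! : ℝ))) atTop (nhds c) := by
  have hFb_top := log_factorial_tendsto_atTop hb
  have hratio := tendsto_log_factorial_ratio ha hb hc hab
  have h2 : Tendsto (fun k => Real.log 2 / Real.log ((b k)! : ℝ)) atTop (nhds 0) :=
    tendsto_const_nhds.div_atTop hFb_top
  have hden : Tendsto (fun k => 1 - Real.log 2 / Real.log ((b k)! : ℝ)) atTop (nhds 1) := by
    have := (tendsto_const_nhds (x := (1:ℝ))).sub h2
    simpa using this
  have hnum : Tendsto (fun k => Real.log ((a k)! : ℝ) / Real.log ((b k)! : ℝ)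
      - Real.log 2 / Real.log ((b k)! : ℝ)) atTop (nhds c) := by
    have := hratio.sub h2
    simpa using this
  have hmain := hnum.div hden one_ne_zero
  rw [div_one] at hmain
  apply hmain.congr'
  filter_upwards [hFb_top.eventually (eventually_ge_atTop (Real.log 2 + 1)),
    ha.eventually (eventually_ge_atTop 1), hb.eventually (eventually_ge_atTop 1)] with k hkb hka1 hkb1
  have hbfne : ((b k)! : ℝ) ≠ 0 := by positivity
  have hafne : ((a k)! : ℝ) ≠ 0 := by positivity
  have hLb : Real.log ((b k)! : ℝ) ≠ 0 := by
    have h2pos : (0:ℝ) < Real.log 2 := Real.log_pos one_lt_two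
    intro h; rw [h] at hkb; linarith
  have hLb2 : Real.log ((b k)! : ℝ) - Real.log 2 ≠ 0 := by intro h; nlinarith
  have hhalf : ∀ x : ℝ, x ≠ 0 → Real.log ((1/2 : ℝ) * x) = Real.log x - Real.log 2 := by
    intro x hx
    rw [Real.log_mul (by norm_num) hx, one_div, Real.log_inv]
    ring
  rw [hhalf _ hafne, hhalf _ hbfne]
  simp only [Pi.div_apply]
  field_simp

open Finset in

/-- Let `A` be a primitive `r × r` nonnegative integer matrix with Perron eigenvalue
`λ` and positive left/right eigenvectors `u, v` normalized so `uv = 1`.  Then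
`log(A^k_{i,j}!) / log(A^k_{p,q}!) → (vu)_{i,j} / (vu)_{p,q}` as `k → ∞`, and
consequently there exist `K ∈ ℕ` and constants `0 < C ≤ 1 ≤ D` such that for all
`k ≥ K` and all `i, j, p, q`,
`C ≤ log((1/2)·A^k_{i,j}!) / log((1/2)·A^k_{p,q}!) ≤ D`. -/
theorem log_factorial_entry_ratio_perron
    {r : ℕ} (A : Matrix (Fin r) (Fin r) ℕ)
    (hPrim : ∃ K : ℕ, ∀ i j, 0 < (A ^ K) i j)
    (lam : ℝ) (hlam : 1 < lam)
    (u v : Fin r → ℝ) (hu : ∀ i, 0 < u i) (hv : ∀ i, 0 < v i)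
    (hleft : u ᵥ* (A.map (Nat.cast : ℕ → ℝ)) = lam • u)
    (hright : (A.map (Nat.cast : ℕ → ℝ)) *ᵥ v = lam • v)
    (hnorm : ∑ i, u i * v i = 1) :
    (∀ i j p q : Fin r,
      Tendsto (fun k : ℕ =>
          Real.log (Nat.factorial ((A ^ k) i j)) / Real.log (Nat.factorial ((A ^ k) p q)))
        atTop (nhds ((v i * u j) / (v p * u q)))) ∧
    (∃ (K : ℕ) (C D : ℝ), 0 < C ∧ C ≤ 1 ∧ 1 ≤ D ∧
      ∀ k : ℕ, K ≤ k → ∀ i j p q : Fin r,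
        C ≤ Real.log ((1 / 2 : ℝ) * (Nat.factorial ((A ^ k) i j) : ℝ)) /
              Real.log ((1 / 2 : ℝ) * (Nat.factorial ((A ^ k) p q) : ℝ)) ∧
          Real.log ((1 / 2 : ℝ) * (Nat.factorial ((A ^ k) i j) : ℝ)) /
              Real.log ((1 / 2 : ℝ) * (Nat.factorial ((A ^ k) p q) : ℝ)) ≤ D) := by
  rcases Nat.eq_zero_or_pos r with rfl | hr
  · exfalso; revert hnorm; simp
  have hlam0 : (0:ℝ) < lam := lt_trans one_pos hlam
  obtain ⟨K0, hK0⟩ := hPrim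
  -- every column of A has a positive entry
  have hcol : ∀ j : Fin r, ∃ a, 0 < A a j := by
    intro j
    by_contra h
    push_neg at h
    have hz : ∀ a, A a j = 0 := fun a => Nat.le_zero.1 (h a)
    have h1 : ∑ a, u a * ((A.map (Nat.cast : ℕ → ℝ)) a j) = lam * u j :=
      congrFun hleft j
    simp only [Matrix.map_apply, hz, Nat.cast_zero, mul_zero, Finset.sum_const_zero] at h1
    have := mul_pos hlam0 (hu j)
    rw [← h1] at this
    exact lt_irrefl 0 this
  have hK : ∀ i j, 0 < (A ^ (K0 + 1)) i j := by
    intro i j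
    obtain ⟨a, ha⟩ := hcol j
    rw [pow_succ, Matrix.mul_apply]
    have : 0 < (A ^ K0) i a * A a j := Nat.mul_pos (hK0 i a) ha
    exact lt_of_lt_of_le this (Finset.single_le_sum (f := fun b => (A ^ K0) i b * A b j)
      (fun b _ => Nat.zero_le _) (Finset.mem_univ a))
  have hlim : ∀ i j, Tendsto (fun k : ℕ => ((A ^ k) i j : ℝ) / lam ^ k) atTop
      (nhds (v i * u j)) :=
    fun i j => perron_entry_tendsto A hr (K0 + 1) (Nat.le_add_left 1 K0) hK lam hlam u v hu hv
      hleft hright hnorm i j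
  have hpowtop : Tendsto (fun k : ℕ => lam ^ k) atTop atTop :=
    tendsto_pow_atTop_atTop_of_one_lt hlam
  have hatTop : ∀ i j, Tendsto (fun k : ℕ => (A ^ k) i j) atTop atTop := by
    intro i j
    rw [← tendsto_natCast_atTop_iff (R := ℝ)]
    have h1 : Tendsto (fun k : ℕ => ((A ^ k) i j : ℝ) / lam ^ k * lam ^ k) atTop atTop :=
      (hlim i j).pos_mul_atTop (mul_pos (hv i) (hu j)) hpowtop
    apply h1.congr
    intro k
    have : lam ^ k ≠ 0 := by positivity
    field_simp
  have hratio : ∀ i j p q : Fin r, Tendsto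
      (fun k : ℕ => ((A ^ k) i j : ℝ) / ((A ^ k) p q : ℝ)) atTop
      (nhds ((v i * u j) / (v p * u q))) := by
    intro i j p q
    have h1 := (hlim i j).div (hlim p q) (mul_pos (hv p) (hu q)).ne'
    apply h1.congr'
    filter_upwards [(hatTop p q).eventually (eventually_ge_atTop 1)] with k hk
    have h2 : ((A ^ k) p q : ℝ) ≠ 0 := by
      have : (0:ℝ) < ((A ^ k) p q : ℝ) := by exact_mod_cast hk
      exact this.ne'
    have h3 : lam ^ k ≠ 0 := by positivity
    simp only [Pi.div_apply]
    field_simp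
  have hcpos : ∀ i j p q : Fin r, 0 < (v i * u j) / (v p * u q) := fun i j p q =>
    div_pos (mul_pos (hv i) (hu j)) (mul_pos (hv p) (hu q))
  constructor
  · intro i j p q
    exact tendsto_log_factorial_ratio (hatTop i j) (hatTop p q) (hcpos i j p q) (hratio i j p q)
  · -- second part
    set c : Fin r × Fin r × Fin r × Fin r → ℝ :=
      fun t => (v t.1 * u t.2.1) / (v t.2.2.1 * u t.2.2.2) with hcdef
    have hcpos' : ∀ t, 0 < c t := fun t => hcpos _ _ _ _
    have hhalf : ∀ t : Fin r × Fin r × Fin r × Fin r, Tendsto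
        (fun k : ℕ => Real.log ((1/2 : ℝ) * (Nat.factorial ((A ^ k) t.1 t.2.1) : ℝ)) /
          Real.log ((1/2 : ℝ) * (Nat.factorial ((A ^ k) t.2.2.1 t.2.2.2) : ℝ)))
        atTop (nhds (c t)) := fun t =>
      tendsto_log_half_factorial_ratio (hatTop t.1 t.2.1) (hatTop t.2.2.1 t.2.2.2)
        (hcpos' t) (hratio t.1 t.2.1 t.2.2.1 t.2.2.2)
    have hev : ∀ᶠ k in (atTop : Filter ℕ), ∀ t : Fin r × Fin r × Fin r × Fin r,
        c t / 2 ≤ Real.log ((1/2 : ℝ) * (Nat.factorial ((A ^ k) t.1 t.2.1) : ℝ)) /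
          Real.log ((1/2 : ℝ) * (Nat.factorial ((A ^ k) t.2.2.1 t.2.2.2) : ℝ)) ∧
        Real.log ((1/2 : ℝ) * (Nat.factorial ((A ^ k) t.1 t.2.1) : ℝ)) /
          Real.log ((1/2 : ℝ) * (Nat.factorial ((A ^ k) t.2.2.1 t.2.2.2) : ℝ)) ≤ c t + 1 := by
      rw [Filter.eventually_all]
      intro t
      have h1 := (hhalf t).eventually (eventually_gt_nhds (by linarith [hcpos' t] : c t / 2 < c t))
      have h2 := (hhalf t).eventually (eventually_lt_nhds (by linarith [hcpos' t] : c t < c t + 1))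
      filter_upwards [h1, h2] with k hk1 hk2
      exact ⟨hk1.le, hk2.le⟩
    obtain ⟨K, hKev⟩ := eventually_atTop.1 hev
    have hneT : (Finset.univ : Finset (Fin r × Fin r × Fin r × Fin r)).Nonempty := by
      refine ⟨⟨⟨0, hr⟩, ⟨0, hr⟩, ⟨0, hr⟩, ⟨0, hr⟩⟩, Finset.mem_univ _⟩
    set C : ℝ := min 1 (Finset.univ.inf' hneT fun t => c t / 2) with hCdef
    set D : ℝ := max 1 (Finset.univ.sup' hneT fun t => c t + 1) with hDdef
    refine ⟨K, C, D, ?_, min_le_left _ _, le_max_left _ _, ?_⟩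
    · apply lt_min one_pos
      obtain ⟨t, _, ht⟩ := Finset.exists_mem_eq_inf' hneT fun t => c t / 2
      rw [ht]
      linarith [hcpos' t]
    · intro k hk i j p q
      have h := hKev k hk (i, j, p, q)
      constructor
      · refine le_trans ?_ h.1
        exact le_trans (min_le_right _ _) (Finset.inf'_le _ (Finset.mem_univ (i, j, p, q)))
      · refine le_trans h.2 ?_
        exact le_trans (Finset.le_sup' (fun t => c t + 1) (Finset.mem_univ (i, j, p, q)))
          (le_max_right _ _)
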